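/- Let α be a nonempty finite type, w : α → ℝ with w(a) > 0 for all a and Σ_a w(a) = 1, and c : α → ℝ with 0 ≤ c(a) ≤ 1 for all a. Set p₁ := Σ_a w(a)·c(a), p₀ := 1 − p₁, m := min_a c(a), M := max_a c(a), m' := min_a (1 − c(a)) = 1 − M, M' := max_a (1 − c(a)) = 1 − m. Assume 0 < p₁ < 1. Then for every real r with 0 < r < 1 lying in [(p₁ − m)/(1 − m), p₁/M] ∪ [(p₀ − m')/(1 − m'), p₀/M'], there exists a probability distribution μ on α × Bool × Bool with coordinates A, X, Y such that: μ(A=a) = w(a) for all a, P(Y=1|A=a) = c(a) for all a, A and Y are conditionally independent given X, X and Y are not independent, and P(X=1) = r. (Proposition 3, sharpness of the bounds.) -/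

import Mathlib

open Classical in
/-- Probability of an event `E` under a finitely supported distribution `μ`. -/
noncomputable def pr {Ω : Type*} [Fintype Ω] (μ : Ω → ℝ) (E : Ω → Prop) : ℝ :=
  ∑ ω, if E ω then μ ω else 0

/-- Conditional probability `P(E | F) = P(E ∧ F) / P(F)`. -/
noncomputable def cpr {Ω : Type*} [Fintype Ω] (μ : Ω → ℝ) (E F : Ω → Prop) : ℝ :=
  pr μ (fun ω => E ω ∧ F ω) / pr μ F

open Classical in
lemma pr_expand {α : Type*} [Fintype α] (μ : α × Bool × Bool → ℝ)
    (E : α × Bool × Bool → Prop) :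
    pr μ E = ∑ a, (((if E (a, true, true) then μ (a, true, true) else 0) +
        if E (a, true, false) then μ (a, true, false) else 0) +
      ((if E (a, false, true) then μ (a, false, true) else 0) +
        if E (a, false, false) then μ (a, false, false) else 0)) := by
  rw [pr, Fintype.sum_prod_type]
  exact Finset.sum_congr rfl fun a _ => by
    rw [Fintype.sum_prod_type, Fintype.sum_bool, Fintype.sum_bool, Fintype.sum_bool]

noncomputable def mkμ {α : Type*} (w t : α → ℝ) (q₀ q₁ : ℝ) (ω : α × Bool × Bool) : ℝ :=
  w ω.1 * (bif ω.2.1 then t ω.1 else 1 - t ω.1) *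
    (bif ω.2.1 then (bif ω.2.2 then q₁ else 1 - q₁) else (bif ω.2.2 then q₀ else 1 - q₀))

lemma find_q (p r m M : ℝ) (hm0 : 0 ≤ m) (hM1 : M ≤ 1) (hmp : m ≤ p) (hpM : p ≤ M)
    (hp0 : 0 < p) (hp1 : p < 1) (hr0 : 0 < r) (hr1 : r < 1)
    (hlow : (p - m) / (1 - m) ≤ r) (hhigh : r ≤ p / M) :
    ∃ q₀ q₁ : ℝ, 0 ≤ q₀ ∧ q₁ ≤ 1 ∧ q₀ < q₁ ∧ r * q₁ + (1 - r) * q₀ = p ∧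
      q₀ ≤ m ∧ M ≤ q₁ := by
  have hM0 : 0 < M := lt_of_lt_of_le hp0 hpM
  have hm1 : m < 1 := lt_of_le_of_lt hmp hp1
  have h1m : 0 < 1 - m := by linarith
  have h1r : 0 < 1 - r := by linarith
  have hlow' : p - m ≤ r * (1 - m) := by
    have := (div_le_iff₀ h1m).mp hlow; linarith
  have hhigh' : r * M ≤ p := by
    have := (le_div_iff₀ hM0).mp hhigh; linarith
  by_cases hpr : p ≤ r
  · refine ⟨0, p / r, le_refl 0, ?_, div_pos hp0 hr0, ?_, hm0, ?_⟩
    · exact div_le_one_of_le₀ hpr hr0.le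
    · field_simp; ring
    · rw [le_div_iff₀ hr0]; nlinarith
  · push_neg at hpr
    refine ⟨(p - r) / (1 - r), 1, div_nonneg (by linarith) h1r.le, le_refl 1, ?_, ?_, ?_, hM1⟩
    · rw [div_lt_one h1r]; linarith
    · field_simp; ring
    · rw [div_le_iff₀ h1r]; nlinarith

lemma build {α : Type*} [Fintype α] [Nonempty α]
    (w : α → ℝ) (hw : ∀ a, 0 < w a) (hwsum : ∑ a, w a = 1)
    (c : α → ℝ) (r q₀ q₁ : ℝ)
    (hq₀ : q₀ ∈ Set.Icc (0:ℝ) 1) (hq₁ : q₁ ∈ Set.Icc (0:ℝ) 1)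
    (hne : q₁ - q₀ ≠ 0)
    (ht : ∀ a, (c a - q₀) / (q₁ - q₀) ∈ Set.Icc (0:ℝ) 1)
    (hr0 : 0 < r) (hr1 : r < 1)
    (hmix : r * q₁ + (1 - r) * q₀ = ∑ a, w a * c a) :
    ∃ μ : α × Bool × Bool → ℝ,
      (∀ ω, 0 ≤ μ ω) ∧ (∑ ω, μ ω = 1) ∧
      (∀ a : α, pr μ (fun ω => ω.1 = a) = w a) ∧
      (∀ a : α, cpr μ (fun ω => ω.2.2 = true) (fun ω => ω.1 = a) = c a) ∧
      (∀ (a : α) (y x : Bool), 0 < pr μ (fun ω => ω.2.1 = x) →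
        cpr μ (fun ω => ω.1 = a ∧ ω.2.2 = y) (fun ω => ω.2.1 = x) =
          cpr μ (fun ω => ω.1 = a) (fun ω => ω.2.1 = x) *
            cpr μ (fun ω => ω.2.2 = y) (fun ω => ω.2.1 = x)) ∧
      (¬ ∀ x y : Bool,
        pr μ (fun ω => ω.2.1 = x ∧ ω.2.2 = y) =
          pr μ (fun ω => ω.2.1 = x) * pr μ (fun ω => ω.2.2 = y)) ∧
      pr μ (fun ω => ω.2.1 = true) = r := by
  classical
  set t : α → ℝ := fun a => (c a - q₀) / (q₁ - q₀) with htdef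
  have ht0 : ∀ a, 0 ≤ t a := fun a => (ht a).1
  have ht1 : ∀ a, t a ≤ 1 := fun a => (ht a).2
  have hca : ∀ a, c a = q₀ + t a * (q₁ - q₀) := by
    intro a; rw [htdef]; field_simp; ring
  have key : (∑ a, w a * t a) * (q₁ - q₀) = r * (q₁ - q₀) := by
    rw [Finset.sum_mul]
    have h2 : ∀ a ∈ Finset.univ, w a * t a * (q₁ - q₀) = w a * c a - w a * q₀ := by
      intro a _; rw [hca a]; ring
    rw [Finset.sum_congr rfl h2, Finset.sum_sub_distrib, ← Finset.sum_mul, hwsum]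
    nlinarith [hmix]
  have hsumt : ∑ a, w a * t a = r := mul_right_cancel₀ hne key
  have hsumt' : ∑ a, w a * (1 - t a) = 1 - r := by
    have h2 : ∀ a ∈ Finset.univ, w a * (1 - t a) = w a - w a * t a := fun a _ => by ring
    rw [Finset.sum_congr rfl h2, Finset.sum_sub_distrib, hwsum, hsumt]
  set μ : α × Bool × Bool → ℝ := mkμ w t q₀ q₁ with hμ
  -- pr of X-events
  have prXt : pr μ (fun ω => ω.2.1 = true) = r := by
    rw [pr_expand, ← hsumt]
    refine Finset.sum_congr rfl fun a _ => ?_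
    simp [hμ, mkμ]
    ring
  have prXf : pr μ (fun ω => ω.2.1 = false) = 1 - r := by
    rw [pr_expand, ← hsumt']
    refine Finset.sum_congr rfl fun a _ => ?_
    simp [hμ, mkμ]
    ring
  have prX : ∀ x : Bool, pr μ (fun ω => ω.2.1 = x) = (bif x then r else 1 - r) := by
    intro x; cases x
    · exact prXf
    · exact prXt
  -- pr (A = a)
  have prA : ∀ a, pr μ (fun ω => ω.1 = a) = w a := by
    intro a
    rw [pr_expand]
    calc _ = ∑ a' : α, (if a' = a then w a' else 0) := by
            refine Finset.sum_congr rfl fun a' _ => ?_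
            by_cases h : a' = a
            · simp [h, hμ, mkμ]
              ring
            · simp [h]
      _ = w a := by rw [Finset.sum_ite_eq']; simp
  -- pr (Y = 1 ∧ A = a)
  have prYA : ∀ a, pr μ (fun ω => ω.2.2 = true ∧ ω.1 = a) = w a * c a := by
    intro a
    rw [pr_expand]
    calc _ = ∑ a' : α, (if a' = a then w a' * c a' else 0) := by
            refine Finset.sum_congr rfl fun a' _ => ?_
            by_cases h : a' = a
            · simp [h, hμ, mkμ]
              rw [hca a]
              ring
            · simp [h]
      _ = w a * c a := by rw [Finset.sum_ite_eq']; simp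
  -- pr (A = a ∧ X = x)
  have prAX : ∀ (a : α) (x : Bool), pr μ (fun ω => ω.1 = a ∧ ω.2.1 = x)
      = w a * (bif x then t a else 1 - t a) := by
    intro a x
    rw [pr_expand]
    calc _ = ∑ a' : α, (if a' = a then w a' * (bif x then t a' else 1 - t a') else 0) := by
            refine Finset.sum_congr rfl fun a' _ => ?_
            by_cases h : a' = a
            · cases x <;> simp [h, hμ, mkμ] <;> ring
            · simp [h]
      _ = _ := by rw [Finset.sum_ite_eq']; simp
  -- pr ((A = a ∧ Y = y) ∧ X = x)
  have prAYX : ∀ (a : α) (y x : Bool),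
      pr μ (fun ω => (ω.1 = a ∧ ω.2.2 = y) ∧ ω.2.1 = x)
      = w a * (bif x then t a else 1 - t a) *
          (bif x then (bif y then q₁ else 1 - q₁) else (bif y then q₀ else 1 - q₀)) := by
    intro a y x
    rw [pr_expand]
    calc _ = ∑ a' : α, (if a' = a then w a' * (bif x then t a' else 1 - t a') *
          (bif x then (bif y then q₁ else 1 - q₁) else (bif y then q₀ else 1 - q₀)) else 0) := by
            refine Finset.sum_congr rfl fun a' _ => ?_
            by_cases h : a' = a
            · cases x <;> cases y <;> simp [h, hμ, mkμ]
            · simp [h]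
      _ = _ := by rw [Finset.sum_ite_eq']; simp
  -- pr (Y = y ∧ X = x)
  have prYX : ∀ (y x : Bool), pr μ (fun ω => ω.2.2 = y ∧ ω.2.1 = x)
      = (bif x then r else 1 - r) *
          (bif x then (bif y then q₁ else 1 - q₁) else (bif y then q₀ else 1 - q₀)) := by
    intro y x
    rw [pr_expand]
    cases x <;> cases y <;> simp only [cond_true, cond_false]
    · rw [show ((1:ℝ) - r) * (1 - q₀) = (∑ a, w a * (1 - t a)) * (1 - q₀) by rw [hsumt'],
        Finset.sum_mul]
      refine Finset.sum_congr rfl fun a _ => ?_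
      simp [hμ, mkμ]
    · rw [show ((1:ℝ) - r) * q₀ = (∑ a, w a * (1 - t a)) * q₀ by rw [hsumt'], Finset.sum_mul]
      refine Finset.sum_congr rfl fun a _ => ?_
      simp [hμ, mkμ]
    · rw [show r * ((1:ℝ) - q₁) = (∑ a, w a * t a) * (1 - q₁) by rw [hsumt], Finset.sum_mul]
      refine Finset.sum_congr rfl fun a _ => ?_
      simp [hμ, mkμ]
    · rw [show r * q₁ = (∑ a, w a * t a) * q₁ by rw [hsumt], Finset.sum_mul]
      refine Finset.sum_congr rfl fun a _ => ?_
      simp [hμ, mkμ]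
  -- pr (X = x ∧ Y = y)
  have prXY : ∀ (x y : Bool), pr μ (fun ω => ω.2.1 = x ∧ ω.2.2 = y)
      = (bif x then r else 1 - r) *
          (bif x then (bif y then q₁ else 1 - q₁) else (bif y then q₀ else 1 - q₀)) := by
    intro x y
    rw [← prYX y x, pr_expand, pr_expand]
    refine Finset.sum_congr rfl fun a _ => ?_
    simp [and_comm]
  -- pr (Y = y)
  have prY : ∀ y : Bool, pr μ (fun ω => ω.2.2 = y)
      = r * (bif y then q₁ else 1 - q₁) + (1 - r) * (bif y then q₀ else 1 - q₀) := by
    intro y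
    rw [pr_expand]
    cases y <;> simp only [cond_true, cond_false]
    · rw [show r * ((1:ℝ) - q₁) + (1 - r) * (1 - q₀)
          = (∑ a, w a * t a) * (1 - q₁) + (∑ a, w a * (1 - t a)) * (1 - q₀) by
            rw [hsumt, hsumt'],
        Finset.sum_mul, Finset.sum_mul, ← Finset.sum_add_distrib]
      refine Finset.sum_congr rfl fun a _ => ?_
      simp [hμ, mkμ]
    · rw [show r * q₁ + ((1:ℝ) - r) * q₀
          = (∑ a, w a * t a) * q₁ + (∑ a, w a * (1 - t a)) * q₀ by rw [hsumt, hsumt'],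
        Finset.sum_mul, Finset.sum_mul, ← Finset.sum_add_distrib]
      refine Finset.sum_congr rfl fun a _ => ?_
      simp [hμ, mkμ]
  refine ⟨μ, ?_, ?_, prA, ?_, ?_, ?_, prXt⟩
  · -- nonnegativity
    rintro ⟨a, x, y⟩
    have h1 := hq₀.1; have h2 := hq₀.2; have h3 := hq₁.1; have h4 := hq₁.2
    have h5 := ht0 a; have h6 := ht1 a; have h7 := (hw a).le
    cases x <;> cases y <;> simp [hμ, mkμ] <;>
      exact mul_nonneg (mul_nonneg h7 (by linarith)) (by linarith)
  · -- total mass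
    rw [Fintype.sum_prod_type, ← hwsum]
    refine Finset.sum_congr rfl fun a _ => ?_
    rw [Fintype.sum_prod_type, Fintype.sum_bool, Fintype.sum_bool, Fintype.sum_bool]
    simp [hμ, mkμ]
    ring
  · -- cpr (Y=1 | A=a) = c a
    intro a
    rw [cpr]
    have hEF : pr μ (fun ω => (fun ω : α × Bool × Bool => ω.2.2 = true) ω ∧
        (fun ω : α × Bool × Bool => ω.1 = a) ω) = w a * c a := prYA a
    rw [hEF, prA a]
    exact mul_div_cancel_left₀ (c a) (hw a).ne'
  · -- conditional independence
    intro a y x _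
    rw [cpr, cpr, cpr]
    have hP : pr μ (fun ω => ω.2.1 = x) = (bif x then r else 1 - r) := prX x
    have hPpos : (0:ℝ) < (bif x then r else 1 - r) := by
      cases x <;> simp <;> linarith
    have e1 : pr μ (fun ω => (fun ω : α × Bool × Bool => ω.1 = a ∧ ω.2.2 = y) ω ∧
        (fun ω : α × Bool × Bool => ω.2.1 = x) ω)
        = w a * (bif x then t a else 1 - t a) *
          (bif x then (bif y then q₁ else 1 - q₁) else (bif y then q₀ else 1 - q₀)) := prAYX a y x
    have e2 : pr μ (fun ω => (fun ω : α × Bool × Bool => ω.1 = a) ω ∧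
        (fun ω : α × Bool × Bool => ω.2.1 = x) ω)
        = w a * (bif x then t a else 1 - t a) := prAX a x
    have e3 : pr μ (fun ω => (fun ω : α × Bool × Bool => ω.2.2 = y) ω ∧
        (fun ω : α × Bool × Bool => ω.2.1 = x) ω)
        = (bif x then r else 1 - r) *
          (bif x then (bif y then q₁ else 1 - q₁) else (bif y then q₀ else 1 - q₀)) := prYX y x
    rw [e1, e2, e3, hP]
    field_simp
  · -- X and Y are not independent
    intro hind
    have h11 := hind true true
    rw [prXY true true, prXt, prY true] at h11
    simp only [cond_true] at h11
    have e : r * (1 - r) * (q₁ - q₀) = 0 := by linear_combination h11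
    have hr1' : (1:ℝ) - r ≠ 0 := by intro h; linarith
    exact hne (by
      rcases mul_eq_zero.mp e with h | h
      · rcases mul_eq_zero.mp h with h' | h'
        · exact absurd h' hr0.ne'
        · exact absurd h' hr1'
      · exact h)

/-- Proposition 3 (sharpness of the bounds). -/
theorem stmt1 {α : Type*} [Fintype α] [Nonempty α]
    (w : α → ℝ) (hw : ∀ a, 0 < w a) (hwsum : ∑ a, w a = 1)
    (c : α → ℝ) (hc : ∀ a, c a ∈ Set.Icc (0:ℝ) 1)
    (p₁ p₀ m M m' M' : ℝ)
    (hp₁ : p₁ = ∑ a, w a * c a) (hp₀ : p₀ = 1 - p₁)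
    (hm : m = Finset.univ.inf' Finset.univ_nonempty c)
    (hM : M = Finset.univ.sup' Finset.univ_nonempty c)
    (hm' : m' = Finset.univ.inf' Finset.univ_nonempty (fun a => 1 - c a))
    (hM' : M' = Finset.univ.sup' Finset.univ_nonempty (fun a => 1 - c a))
    (hp₁pos : 0 < p₁) (hp₁lt : p₁ < 1)
    (r : ℝ) (hr0 : 0 < r) (hr1 : r < 1)
    (hr : r ∈ Set.Icc ((p₁ - m) / (1 - m)) (p₁ / M) ∪
            Set.Icc ((p₀ - m') / (1 - m')) (p₀ / M')) :
    ∃ μ : α × Bool × Bool → ℝ,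
      (∀ ω, 0 ≤ μ ω) ∧ (∑ ω, μ ω = 1) ∧
      (∀ a : α, pr μ (fun ω => ω.1 = a) = w a) ∧
      (∀ a : α, cpr μ (fun ω => ω.2.2 = true) (fun ω => ω.1 = a) = c a) ∧
      (∀ (a : α) (y x : Bool), 0 < pr μ (fun ω => ω.2.1 = x) →
        cpr μ (fun ω => ω.1 = a ∧ ω.2.2 = y) (fun ω => ω.2.1 = x) =
          cpr μ (fun ω => ω.1 = a) (fun ω => ω.2.1 = x) *
            cpr μ (fun ω => ω.2.2 = y) (fun ω => ω.2.1 = x)) ∧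
      (¬ ∀ x y : Bool,
        pr μ (fun ω => ω.2.1 = x ∧ ω.2.2 = y) =
          pr μ (fun ω => ω.2.1 = x) * pr μ (fun ω => ω.2.2 = y)) ∧
      pr μ (fun ω => ω.2.1 = true) = r := by
  rcases hr with hr | hr
  · -- first interval: use c directly
    have hm0 : 0 ≤ m := hm ▸ Finset.le_inf' _ _ (fun b _ => (hc b).1)
    have hM1 : M ≤ 1 := hM ▸ Finset.sup'_le _ _ (fun b _ => (hc b).2)
    have hmc : ∀ a, m ≤ c a := fun a => hm ▸ Finset.inf'_le _ (Finset.mem_univ a)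
    have hcM : ∀ a, c a ≤ M := fun a => hM ▸ Finset.le_sup' _ (Finset.mem_univ a)
    have hmp : m ≤ p₁ := by
      rw [hp₁, ← one_mul m, ← hwsum, Finset.sum_mul]
      exact Finset.sum_le_sum fun a _ => mul_le_mul_of_nonneg_left (hmc a) (hw a).le
    have hpM : p₁ ≤ M := by
      rw [hp₁, ← one_mul M, ← hwsum, Finset.sum_mul]
      exact Finset.sum_le_sum fun a _ => mul_le_mul_of_nonneg_left (hcM a) (hw a).le
    obtain ⟨q₀, q₁, h0, h1, hlt, hmixq, hq₀m, hMq₁⟩ :=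
      find_q p₁ r m M hm0 hM1 hmp hpM hp₁pos hp₁lt hr0 hr1 hr.1 hr.2
    have hd : 0 < q₁ - q₀ := by linarith
    refine build w hw hwsum c r q₀ q₁ ⟨h0, by linarith⟩ ⟨by linarith, h1⟩
      (by positivity) (fun a => ⟨?_, ?_⟩) hr0 hr1 (hp₁ ▸ hmixq)
    · exact div_nonneg (by linarith [hmc a]) hd.le
    · rw [div_le_one hd]; linarith [hcM a]
  · -- second interval: use 1 - c
    have hp₀sum : p₀ = ∑ a, w a * (1 - c a) := by
      have h2 : ∀ a ∈ Finset.univ, w a * (1 - c a) = w a - w a * c a := fun a _ => by ring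
      rw [Finset.sum_congr rfl h2, Finset.sum_sub_distrib, hwsum, ← hp₁, hp₀]
    have hm0 : 0 ≤ m' := hm' ▸ Finset.le_inf' _ _ (fun b _ => by
      have := (hc b).2; simp; linarith)
    have hM1 : M' ≤ 1 := hM' ▸ Finset.sup'_le _ _ (fun b _ => by
      have := (hc b).1; simp; linarith)
    have hmc : ∀ a, m' ≤ 1 - c a := fun a => hm' ▸ Finset.inf'_le _ (Finset.mem_univ a)
    have hcM : ∀ a, 1 - c a ≤ M' := fun a => hM' ▸ Finset.le_sup' (fun a => 1 - c a) (Finset.mem_univ a)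
    have hmp : m' ≤ p₀ := by
      have h1 : ∑ a, w a * m' ≤ ∑ a, w a * (1 - c a) :=
        Finset.sum_le_sum fun a _ => mul_le_mul_of_nonneg_left (hmc a) (hw a).le
      have h2 : ∑ a, w a * m' = m' := by rw [← Finset.sum_mul, hwsum, one_mul]
      rw [hp₀sum]; linarith
    have hpM : p₀ ≤ M' := by
      have h1 : ∑ a, w a * (1 - c a) ≤ ∑ a, w a * M' :=
        Finset.sum_le_sum fun a _ => mul_le_mul_of_nonneg_left (hcM a) (hw a).le
      have h2 : ∑ a, w a * M' = M' := by rw [← Finset.sum_mul, hwsum, one_mul]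
      rw [hp₀sum]; linarith
    obtain ⟨q₀', q₁', h0, h1, hlt, hmixq, hq₀m, hMq₁⟩ :=
      find_q p₀ r m' M' hm0 hM1 hmp hpM (by linarith) (by linarith) hr0 hr1 hr.1 hr.2
    have hd : 0 < q₁' - q₀' := by linarith
    refine build w hw hwsum c r (1 - q₀') (1 - q₁')
      ⟨by linarith, by linarith⟩ ⟨by linarith, by linarith⟩
      (by intro h; apply hd.ne'; linarith) (fun a => ?_) hr0 hr1 ?_
    · have heq : (c a - (1 - q₀')) / ((1 - q₁') - (1 - q₀'))
          = ((1 - c a) - q₀') / (q₁' - q₀') := by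
        rw [div_eq_div_iff (by linarith) (by linarith)]
        ring
      rw [heq]
      constructor
      · exact div_nonneg (by linarith [hmc a]) hd.le
      · rw [div_le_one hd]; linarith [hcM a]
    · rw [← hp₁]
      linear_combination -hmixq - hp₀
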